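/- arXiv:2601.08437 — 2 statements merged into one kernel-verified Lean document; each statement's English description precedes it below -/
import Mathlib

section
/- If A, B ∈ H²(O) are both nonnegative definite octonionic Hermitian 2x2 matrices, then their mixed determinant det(A,B) = (1/2)(a₁₁b₂₂ + a₂₂b₁₁ - 2 Re(a₁₂ b₂₁)) is nonnegative. -/
noncomputable section

open Quaternion

/-- The octonions, as the Cayley–Dickson double of the quaternions. -/
@[ext] structure Octonion : Type where
  q1 : Quaternion ℝ
  q2 : Quaternion ℝ

namespace Octonion

def equivProd : Octonion ≃ Quaternion ℝ × Quaternion ℝ :=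
  ⟨fun x => (x.q1, x.q2), fun p => ⟨p.1, p.2⟩, fun _ => rfl, fun _ => rfl⟩

instance : AddCommGroup Octonion := equivProd.addCommGroup
instance : Module ℝ Octonion := equivProd.module ℝ
instance : TopologicalSpace Octonion :=
  TopologicalSpace.induced equivProd inferInstance

instance : One Octonion := ⟨⟨1, 0⟩⟩

/-- Cayley–Dickson multiplication: `(a,b)(c,d) = (ac - d̄b, da + b c̄)`. -/
instance : Mul Octonion :=
  ⟨fun x y => ⟨x.q1 * y.q1 - star y.q2 * x.q2, y.q2 * x.q1 + x.q2 * star y.q1⟩⟩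

/-- Octonionic conjugation. -/
def conj (x : Octonion) : Octonion := ⟨star x.q1, -x.q2⟩

/-- The real part of an octonion. -/
def re (x : Octonion) : ℝ := x.q1.re

/-- The imaginary part of an octonion. -/
def im (x : Octonion) : Octonion := (2⁻¹ : ℝ) • (x - conj x)

/-- The squared norm `|x|²` of an octonion. -/
def normSq (x : Octonion) : ℝ := Quaternion.normSq x.q1 + Quaternion.normSq x.q2

/-- The inverse of an octonion (junk value `0` at `0`). -/
def inv (x : Octonion) : Octonion := (normSq x)⁻¹ • conj x

end Octonion

namespace Octonion

/-- The Hermitian quadratic form `Re(ξ* A ξ)` of `A = [[a, x],[conj x, b]]` at `ξ = (ξ₁, ξ₂)`: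
`a|ξ₁|² + b|ξ₂|² + 2 Re(conj(ξ₁) x ξ₂)`. -/
def qform (a b : ℝ) (x : Octonion) (ξ₁ ξ₂ : Octonion) : ℝ :=
  a * normSq ξ₁ + b * normSq ξ₂ + 2 * re ((conj ξ₁ * x) * ξ₂)

/-- An octonionic Hermitian `2×2` matrix `[[d1, x],[conj x, d2]]`. -/
@[ext] structure Herm2 : Type where
  d1 : ℝ
  d2 : ℝ
  x : Octonion

namespace Herm2

instance : Add Herm2 := ⟨fun A B => ⟨A.d1 + B.d1, A.d2 + B.d2, A.x + B.x⟩⟩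
instance : SMul ℝ Herm2 := ⟨fun r A => ⟨r * A.d1, r * A.d2, r • A.x⟩⟩

/-- Nonnegative definiteness: `Re(ξ* A ξ) ≥ 0` for all `ξ ∈ O²`. -/
def PosSemidef (A : Herm2) : Prop := ∀ ξ₁ ξ₂ : Octonion, 0 ≤ qform A.d1 A.d2 A.x ξ₁ ξ₂

/-- Positive definiteness: `Re(ξ* A ξ) > 0` for all nonzero `ξ ∈ O²`. -/
def PosDef (A : Herm2) : Prop :=
  ∀ ξ₁ ξ₂ : Octonion, ¬(ξ₁ = 0 ∧ ξ₂ = 0) → 0 < qform A.d1 A.d2 A.x ξ₁ ξ₂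

/-- The determinant `det A = ab - |x|²`. -/
def det (A : Herm2) : ℝ := A.d1 * A.d2 - normSq A.x

/-- The mixed determinant `det(A,B) = (1/2)(a₁₁b₂₂ + a₂₂b₁₁ - 2 Re(a₁₂ b₂₁))`,
where `b₂₁ = conj(b₁₂)`. -/
def mixedDet (A B : Herm2) : ℝ :=
  (1 / 2) * (A.d1 * B.d2 + A.d2 * B.d1 - 2 * re (A.x * conj B.x))

end Herm2

end Octonion

open Octonion Quaternion

lemma re_mul_conj (x y : Octonion) :
    re (x * conj y) = (x.q1 * star y.q1).re + (star y.q2 * x.q2).re := by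
  show (x.q1 * star y.q1 - star (-y.q2) * x.q2).re = _
  simp [sub_eq_add_neg]
set_option maxHeartbeats 2000000 in
lemma cs (x y : Octonion) : (re (x * conj y))^2 ≤ normSq x * normSq y := by
  rw [re_mul_conj]
  obtain ⟨a, b⟩ := x; obtain ⟨c, d⟩ := y
  show _ ≤ (Quaternion.normSq a + Quaternion.normSq b) * (Quaternion.normSq c + Quaternion.normSq d)
  simp only [Quaternion.normSq_def', Quaternion.re_mul, Quaternion.re_star,
    Quaternion.imI_star, Quaternion.imJ_star, Quaternion.imK_star]
  linarith [sq_nonneg (a.re*c.imI - a.imI*c.re), sq_nonneg (a.re*c.imJ - a.imJ*c.re),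
    sq_nonneg (a.re*c.imK - a.imK*c.re), sq_nonneg (a.imI*c.imJ - a.imJ*c.imI),
    sq_nonneg (a.imI*c.imK - a.imK*c.imI), sq_nonneg (a.imJ*c.imK - a.imK*c.imJ),
    sq_nonneg (b.re*d.imI - b.imI*d.re), sq_nonneg (b.re*d.imJ - b.imJ*d.re),
    sq_nonneg (b.re*d.imK - b.imK*d.re), sq_nonneg (b.imI*d.imJ - b.imJ*d.imI),
    sq_nonneg (b.imI*d.imK - b.imK*d.imI), sq_nonneg (b.imJ*d.imK - b.imK*d.imJ),
    sq_nonneg (a.re*d.re - b.re*c.re), sq_nonneg (a.re*d.imI - b.imI*c.re),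
    sq_nonneg (a.re*d.imJ - b.imJ*c.re), sq_nonneg (a.re*d.imK - b.imK*c.re),
    sq_nonneg (a.imI*d.re - b.re*c.imI), sq_nonneg (a.imI*d.imI - b.imI*c.imI),
    sq_nonneg (a.imI*d.imJ - b.imJ*c.imI), sq_nonneg (a.imI*d.imK - b.imK*c.imI),
    sq_nonneg (a.imJ*d.re - b.re*c.imJ), sq_nonneg (a.imJ*d.imI - b.imI*c.imJ),
    sq_nonneg (a.imJ*d.imJ - b.imJ*c.imJ), sq_nonneg (a.imJ*d.imK - b.imK*c.imJ),
    sq_nonneg (a.imK*d.re - b.re*c.imK), sq_nonneg (a.imK*d.imI - b.imI*c.imK),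
    sq_nonneg (a.imK*d.imJ - b.imJ*c.imK), sq_nonneg (a.imK*d.imK - b.imK*c.imK)]
lemma normSq_nonneg' (x : Octonion) : 0 ≤ normSq x :=
  add_nonneg (Quaternion.normSq_nonneg) (Quaternion.normSq_nonneg)

lemma qform_one_zero (a b : ℝ) (x : Octonion) : qform a b x 1 0 = a := by
  have h1 : normSq (1 : Octonion) = 1 := by
    show Quaternion.normSq 1 + Quaternion.normSq 0 = 1; simp
  have h0 : normSq (0 : Octonion) = 0 := by
    show Quaternion.normSq 0 + Quaternion.normSq 0 = 0; simp
  have h2 : re ((conj 1 * x) * (0 : Octonion)) = 0 := by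
    show ((conj 1 * x).q1 * (0:Octonion).q1 - star (0:Octonion).q2 * (conj 1 * x).q2).re = 0
    show ((conj 1 * x).q1 * 0 - star (0:ℍ) * (conj 1 * x).q2).re = 0
    simp
  rw [qform, h1, h0, h2]; ring

lemma qform_zero_one (a b : ℝ) (x : Octonion) : qform a b x 0 1 = b := by
  have h1 : normSq (1 : Octonion) = 1 := by
    show Quaternion.normSq 1 + Quaternion.normSq 0 = 1; simp
  have h0 : normSq (0 : Octonion) = 0 := by
    show Quaternion.normSq 0 + Quaternion.normSq 0 = 0; simp
  have hc : conj (0 : Octonion) * x = 0 := by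
    refine Octonion.ext ?_ ?_
    · show (star (0:ℍ)) * x.q1 - star x.q2 * (-(0:ℍ)) = (0:Octonion).q1; simp; rfl
    · show x.q2 * (star (0:ℍ)) + (-(0:ℍ)) * star x.q1 = (0:Octonion).q2; simp; rfl
  have h2 : re ((conj 0 * x) * (1 : Octonion)) = 0 := by
    rw [hc]
    show ((0:Octonion).q1 * (1:Octonion).q1 - star (1:Octonion).q2 * (0:Octonion).q2).re = 0
    show ((0:ℍ) * 1 - star (0:ℍ) * 0).re = 0
    simp
  rw [qform, h1, h0, h2]; ring
lemma mul_q1' (x y : Octonion) : (x*y).q1 = x.q1*y.q1 - star y.q2 * x.q2 := rfl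
lemma mul_q2' (x y : Octonion) : (x*y).q2 = y.q2*x.q1 + x.q2*star y.q1 := rfl
lemma conj_q1' (x : Octonion) : (conj x).q1 = star x.q1 := rfl
lemma conj_q2' (x : Octonion) : (conj x).q2 = -x.q2 := rfl
lemma neg_q1' (x : Octonion) : (-x).q1 = -x.q1 := rfl
lemma neg_q2' (x : Octonion) : (-x).q2 = -x.q2 := rfl
lemma re_def' (x : Octonion) : re x = x.q1.re := rfl
lemma normSq_def'' (x : Octonion) :
    normSq x = Quaternion.normSq x.q1 + Quaternion.normSq x.q2 := rfl

lemma qform_special (a b : ℝ) (x : Octonion) (t : ℝ) :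
    qform a b x ⟨(t:ℍ[ℝ]), 0⟩ (-conj x)
      = a*(t*t) + (-(2*normSq x))*t + b*normSq x := by
  have h1 : normSq (⟨(t:ℍ[ℝ]), 0⟩ : Octonion) = t*t := by
    simp [normSq_def'', Quaternion.normSq_def']; ring
  have h2 : normSq (-conj x) = normSq x := by
    simp [normSq_def'', neg_q1', neg_q2', conj_q1', conj_q2']
  have h3 : re ((conj (⟨(t:ℍ[ℝ]),0⟩:Octonion) * x) * (-conj x)) = -(t * normSq x) := by
    simp only [re_def', mul_q1', mul_q2', conj_q1', conj_q2', neg_q1', neg_q2',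
      normSq_def'']
    simp only [Quaternion.normSq_def', Quaternion.re_sub, Quaternion.re_add,
      Quaternion.re_neg, Quaternion.re_mul, Quaternion.re_star, Quaternion.imI_star,
      Quaternion.imJ_star, Quaternion.imK_star, Quaternion.imI_neg, Quaternion.imJ_neg,
      Quaternion.imK_neg, Quaternion.imI_sub, Quaternion.imJ_sub, Quaternion.imK_sub,
      Quaternion.imI_add, Quaternion.imJ_add, Quaternion.imK_add,
      Quaternion.re_coe, Quaternion.imI_coe, Quaternion.imJ_coe, Quaternion.imK_coe,
      Quaternion.imI_mul, Quaternion.imJ_mul, Quaternion.imK_mul]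
    ring
  rw [qform, h1, h2, h3]; ring

lemma normSq_sq_le (a b : ℝ) (x : Octonion)
    (h : ∀ ξ₁ ξ₂ : Octonion, 0 ≤ qform a b x ξ₁ ξ₂) :
    (normSq x)^2 ≤ a * b * normSq x := by
  have key : ∀ t : ℝ, 0 ≤ a*(t*t) + (-(2*normSq x))*t + b*normSq x := by
    intro t; rw [← qform_special]; exact h _ _
  have hd := discrim_le_zero key
  rw [discrim] at hd
  nlinarith [hd]
open Octonion in
/-- If `A, B` are nonnegative definite octonionic Hermitian `2×2` matrices,
then their mixed determinant is nonnegative. -/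
theorem herm2_mixedDet_nonneg (A B : Herm2) (hA : A.PosSemidef) (hB : B.PosSemidef) :
    0 ≤ A.mixedDet B := by
  obtain ⟨a1, a2, x⟩ := A
  obtain ⟨b1, b2, y⟩ := B
  have ha1 : 0 ≤ a1 := by have := hA 1 0; rwa [qform_one_zero] at this
  have ha2 : 0 ≤ a2 := by have := hA 0 1; rwa [qform_zero_one] at this
  have hb1 : 0 ≤ b1 := by have := hB 1 0; rwa [qform_one_zero] at this
  have hb2 : 0 ≤ b2 := by have := hB 0 1; rwa [qform_zero_one] at this
  have hX0 : 0 ≤ normSq x := normSq_nonneg' x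
  have hY0 : 0 ≤ normSq y := normSq_nonneg' y
  have hX2 : (normSq x)^2 ≤ a1 * a2 * normSq x := normSq_sq_le a1 a2 x hA
  have hY2 : (normSq y)^2 ≤ b1 * b2 * normSq y := normSq_sq_le b1 b2 y hB
  have hr : (re (x * conj y))^2 ≤ normSq x * normSq y := cs x y
  set X := normSq x with hXdef
  set Y := normSq y with hYdef
  set r := re (x * conj y) with hrdef
  have hr2 : r^2 ≤ (a1 * a2) * (b1 * b2) := by
    rcases eq_or_lt_of_le hX0 with hX | hX
    · have : r^2 ≤ 0 := by rw [← hX] at hr; simpa using hr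
      exact this.trans (mul_nonneg (mul_nonneg ha1 ha2) (mul_nonneg hb1 hb2))
    · rcases eq_or_lt_of_le hY0 with hY | hY
      · have : r^2 ≤ 0 := by rw [← hY] at hr; simpa using hr
        exact this.trans (mul_nonneg (mul_nonneg ha1 ha2) (mul_nonneg hb1 hb2))
      · have hXle : X ≤ a1 * a2 := by nlinarith [hX2]
        have hYle : Y ≤ b1 * b2 := by nlinarith [hY2]
        calc r^2 ≤ X * Y := hr
          _ ≤ (a1 * a2) * (b1 * b2) := by nlinarith [hX.le, hY.le]
  show 0 ≤ (1/2) * (a1 * b2 + a2 * b1 - 2 * r)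
  nlinarith [sq_nonneg (a1*b2 - a2*b1), mul_nonneg ha1 hb2, mul_nonneg ha2 hb1,
    sq_nonneg (a1*b2 + a2*b1 - 2*r), sq_nonneg (a1*b2 + a2*b1 + 2*r)]
end
end

section
/- Let K_ε(x) = -(|x|² + ε)^{-3} on O² ≅ ℝ¹⁶ for ε > 0. Then the octonionic Hessian of K_ε has entries conj∂_α ∂_β K_ε = -48 (|x|²+ε)^{-5} x_α conj(x_β) + 48 δ_{αβ} (|x|²+ε)^{-4}, and its determinant equals det(Hess_O(K_ε)) = 48² ε / (|x|²+ε)⁹ > 0. -/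
noncomputable section

open Quaternion

namespace Octonion

/-- The octonion with coordinates `v : Fin 8 → ℝ` in the standard basis `e₀,…,e₇`. -/
def octOf (v : Fin 8 → ℝ) : Octonion := ⟨⟨v 0, v 1, v 2, v 3⟩, ⟨v 4, v 5, v 6, v 7⟩⟩

/-- The standard basis `e_p`, `p = 0,…,7`, of the octonions, with `e₀ = 1`. -/
def basisE (p : Fin 8) : Octonion := octOf (Pi.single p 1)

end Octonion

/-- Points of `O²` as real coordinates `x = (x_{αp})`, `α ∈ {1,2}`, `p ∈ {0,…,7}`. -/
abbrev OPt : Type := Fin 2 → Fin 8 → ℝ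

/-- The octonionic coordinate `x_α` of a point of `O² ≅ ℝ¹⁶`. -/
def octPt (x : OPt) (α : Fin 2) : Octonion := Octonion.octOf (x α)

/-- The squared norm `|x|²` of a point of `O² ≅ ℝ¹⁶`. -/
def ptNormSq (x : OPt) : ℝ := ∑ α : Fin 2, ∑ p : Fin 8, (x α p) ^ 2

/-- The partial derivative `∂u/∂x_{αp}`. -/
def pd (α : Fin 2) (p : Fin 8) (u : OPt → ℝ) (x : OPt) : ℝ :=
  fderiv ℝ u x (Pi.single α (Pi.single p 1))

/-- The Dirac operator `conj∂_α u = Σ_p e_p ∂u/∂x_{αp}` (for real-valued `u` this is the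
octonion whose coordinates are the partial derivatives). -/
def diracD (α : Fin 2) (u : OPt → ℝ) (x : OPt) : Octonion :=
  Octonion.octOf fun p => pd α p u x

/-- The entry `conj∂_α ∂_β u = Σ_{q,p} (∂²u/∂x_{αq}∂x_{βp}) e_q conj(e_p)` of the octonionic
Hessian of a scalar function `u`. -/
def octHess (u : OPt → ℝ) (α β : Fin 2) (x : OPt) : Octonion :=
  ∑ q : Fin 8, ∑ p : Fin 8,
    (pd α q (fun y => pd β p u y) x) • (Octonion.basisE q * Octonion.conj (Octonion.basisE p))

/-- The determinant of an octonionic Hermitian `2×2` matrix given by its entries: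
`det A = a₁₁ a₂₂ - |a₁₂|²` (the diagonal entries being real). -/
def detEntries (A : Fin 2 → Fin 2 → Octonion) : ℝ :=
  Octonion.re (A 0 0) * Octonion.re (A 1 1) - Octonion.normSq (A 0 1)

namespace Octonion

lemma add_q1 (x y : Octonion) : (x + y).q1 = x.q1 + y.q1 := rfl
lemma add_q2 (x y : Octonion) : (x + y).q2 = x.q2 + y.q2 := rfl
lemma smul_q1 (c : ℝ) (x : Octonion) : (c • x).q1 = c • x.q1 := rfl
lemma smul_q2 (c : ℝ) (x : Octonion) : (c • x).q2 = c • x.q2 := rfl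
lemma one_q1 : (1 : Octonion).q1 = 1 := rfl
lemma one_q2 : (1 : Octonion).q2 = 0 := rfl
lemma zero_q1 : (0 : Octonion).q1 = 0 := rfl
lemma zero_q2 : (0 : Octonion).q2 = 0 := rfl
lemma mul_q1 (x y : Octonion) : (x * y).q1 = x.q1 * y.q1 - star y.q2 * x.q2 := rfl
lemma mul_q2 (x y : Octonion) : (x * y).q2 = y.q2 * x.q1 + x.q2 * star y.q1 := rfl

end Octonion
namespace Octonion

lemma conj_add (x y : Octonion) : conj (x + y) = conj x + conj y := by
  ext <;> simp [conj, add_q1, add_q2, star_add] <;> abel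

lemma conj_smul (c : ℝ) (x : Octonion) : conj (c • x) = c • conj x := by
  ext <;> simp [conj, smul_q1, smul_q2, Quaternion.star_smul]

lemma smul_mul (c : ℝ) (x y : Octonion) : (c • x) * y = c • (x * y) := by
  ext <;> simp [mul_q1, mul_q2, smul_q1, smul_q2, smul_sub, smul_add,
    mul_smul_comm, smul_mul_assoc]

lemma mul_smul' (c : ℝ) (x y : Octonion) : x * (c • y) = c • (x * y) := by
  ext <;> simp [mul_q1, mul_q2, smul_q1, smul_q2, Quaternion.star_smul, smul_sub, smul_add,
    mul_smul_comm, smul_mul_assoc]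

lemma add_mul' (x y z : Octonion) : (x + y) * z = x * z + y * z := by
  ext <;> simp [mul_q1, mul_q2, add_q1, add_q2, mul_add, add_mul] <;> abel

lemma mul_add' (x y z : Octonion) : x * (y + z) = x * y + x * z := by
  ext <;> simp [mul_q1, mul_q2, add_q1, add_q2, star_add, mul_add, add_mul] <;> abel

lemma zero_mul' (y : Octonion) : (0 : Octonion) * y = 0 := by
  ext <;> simp [mul_q1, mul_q2, zero_q1, zero_q2]

lemma mul_zero' (x : Octonion) : x * (0 : Octonion) = 0 := by
  ext <;> simp [mul_q1, mul_q2, zero_q1, zero_q2]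

lemma normSq_smul (c : ℝ) (x : Octonion) : normSq (c • x) = c ^ 2 * normSq x := by
  simp only [normSq, smul_q1, smul_q2, Quaternion.normSq_def', Quaternion.re_smul,
    Quaternion.imI_smul, Quaternion.imJ_smul, Quaternion.imK_smul, smul_eq_mul]
  ring

lemma normSq_conj (x : Octonion) : normSq (conj x) = normSq x := by
  simp only [normSq, conj, Quaternion.normSq_def', Quaternion.re_star,
    Quaternion.imI_star, Quaternion.imJ_star, Quaternion.imK_star,
    Quaternion.re_neg, Quaternion.imI_neg, Quaternion.imJ_neg, Quaternion.imK_neg]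
  ring

lemma normSq_mul (x y : Octonion) : normSq (x * y) = normSq x * normSq y := by
  simp [normSq, mul_q1, mul_q2, Quaternion.normSq_def', Quaternion.re_mul,
    Quaternion.imI_mul, Quaternion.imJ_mul, Quaternion.imK_mul,
    Quaternion.re_sub, Quaternion.imI_sub, Quaternion.imJ_sub, Quaternion.imK_sub,
    Quaternion.re_add, Quaternion.imI_add, Quaternion.imJ_add, Quaternion.imK_add,
    Quaternion.re_star, Quaternion.imI_star, Quaternion.imJ_star, Quaternion.imK_star]
  ring

lemma mul_conj_self (x : Octonion) : x * conj x = normSq x • 1 := by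
  ext <;>
    simp only [mul_q1, mul_q2, conj, smul_q1, smul_q2, one_q1, one_q2, normSq,
      Quaternion.normSq_def', Quaternion.re_mul, Quaternion.imI_mul, Quaternion.imJ_mul,
      Quaternion.imK_mul, Quaternion.re_sub, Quaternion.imI_sub, Quaternion.imJ_sub,
      Quaternion.imK_sub, Quaternion.re_add, Quaternion.imI_add, Quaternion.imJ_add,
      Quaternion.imK_add, Quaternion.re_star, Quaternion.imI_star, Quaternion.imJ_star,
      Quaternion.imK_star, Quaternion.re_neg, Quaternion.imI_neg, Quaternion.imJ_neg,
      Quaternion.imK_neg, Quaternion.re_smul, Quaternion.imI_smul, Quaternion.imJ_smul,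
      Quaternion.imK_smul, smul_eq_mul, Quaternion.re_one, Quaternion.imI_one,
      Quaternion.imJ_one, Quaternion.imK_one, Quaternion.re_zero, Quaternion.imI_zero,
      Quaternion.imJ_zero, Quaternion.imK_zero] <;>
    ring

lemma re_add (x y : Octonion) : re (x + y) = re x + re y := rfl
lemma re_smul (c : ℝ) (x : Octonion) : re (c • x) = c * re x := rfl
lemma re_one : re (1 : Octonion) = 1 := rfl
lemma re_smul_one (c : ℝ) : re (c • (1 : Octonion)) = c := by simp [re_smul, re_one]

end Octonion
namespace Octonion

/-- Conjugation as an additive monoid hom. -/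
def conjHom : Octonion →+ Octonion := AddMonoidHom.mk' conj conj_add

lemma sum_mul_oct {s : Finset (Fin 8)} (f : Fin 8 → Octonion) (y : Octonion) :
    (∑ i ∈ s, f i) * y = ∑ i ∈ s, f i * y := by
  classical
  induction s using Finset.induction with
  | empty => simp [zero_mul']
  | insert _ _ h ih => simp [Finset.sum_insert h, add_mul', ih]

lemma oct_mul_sum {s : Finset (Fin 8)} (x : Octonion) (f : Fin 8 → Octonion) :
    x * (∑ i ∈ s, f i) = ∑ i ∈ s, x * f i := by
  classical
  induction s using Finset.induction with
  | empty => simp [mul_zero']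
  | insert _ _ h ih => simp [Finset.sum_insert h, mul_add', ih]

lemma octOf_eq_sum (v : Fin 8 → ℝ) : octOf v = ∑ p, v p • basisE p := by
  ext <;>
    simp [Fin.sum_univ_eight, add_q1, add_q2, smul_q1, smul_q2, Quaternion.re_smul] <;>
    simp [octOf, basisE, Pi.single_apply]

lemma normSq_octOf (v : Fin 8 → ℝ) : normSq (octOf v) = ∑ p, v p ^ 2 := by
  simp [octOf, normSq, Quaternion.normSq_def', Fin.sum_univ_eight]
  erw [Quaternion.normSq_def', Quaternion.normSq_def']
  ring

lemma normSq_basisE (q : Fin 8) : normSq (basisE q) = 1 := by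
  rw [basisE, normSq_octOf]
  simp [Pi.single_apply]

lemma sum_smul_mul (a b : Fin 8 → ℝ) :
    ∑ q, ∑ p, (a q * b p) • (basisE q * conj (basisE p)) =
      octOf a * conj (octOf b) := by
  rw [octOf_eq_sum a, octOf_eq_sum b]
  rw [show conj (∑ p, b p • basisE p) = ∑ p, b p • conj (basisE p) by
    rw [show (conj (∑ p, b p • basisE p)) = conjHom (∑ p, b p • basisE p) from rfl,
      map_sum]
    exact Finset.sum_congr rfl fun p _ => conj_smul _ _]
  rw [sum_mul_oct]
  refine Finset.sum_congr rfl fun q _ => ?_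
  rw [oct_mul_sum]
  refine Finset.sum_congr rfl fun p _ => ?_
  rw [smul_mul, mul_smul', smul_smul]

lemma sum_basis_mul_conj : ∑ q, basisE q * conj (basisE q) = (8 : ℝ) • (1 : Octonion) := by
  have : ∀ q : Fin 8, basisE q * conj (basisE q) = (1:ℝ) • (1 : Octonion) := fun q => by
    rw [mul_conj_self, normSq_basisE]
  simp [this]
  module

end Octonion
/-- Coordinate evaluation as a continuous linear map. -/
def ev (α : Fin 2) (p : Fin 8) : OPt →L[ℝ] ℝ :=
  (ContinuousLinearMap.proj p : (Fin 8 → ℝ) →L[ℝ] ℝ).comp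
    (ContinuousLinearMap.proj α : OPt →L[ℝ] (Fin 8 → ℝ))

lemma ev_apply (α : Fin 2) (p : Fin 8) (v : OPt) : ev α p v = v α p := rfl

lemma ev_single (α β : Fin 2) (p q : Fin 8) :
    ev α p (Pi.single β (Pi.single q 1)) = if α = β ∧ p = q then 1 else 0 := by
  rw [ev_apply]
  rcases eq_or_ne α β with h | h
  · subst h
    rw [Pi.single_eq_same]
    rcases eq_or_ne p q with h2 | h2
    · subst h2; simp
    · simp [Pi.single_eq_of_ne h2, h2]
  · rw [Pi.single_eq_of_ne h]
    simp [h]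

/-- The derivative of `ptNormSq + ε`. -/
def Dg (x : OPt) : OPt →L[ℝ] ℝ :=
  ∑ α : Fin 2, ∑ p : Fin 8, (2 * x α p) • ev α p

lemma Dg_single (x : OPt) (β : Fin 2) (q : Fin 8) :
    Dg x (Pi.single β (Pi.single q 1)) = 2 * x β q := by
  simp only [Dg, ContinuousLinearMap.sum_apply, ContinuousLinearMap.smul_apply,
    ev_single, smul_eq_mul, mul_ite, mul_one, mul_zero]
  rw [Finset.sum_eq_single β]
  · rw [Finset.sum_eq_single q] <;> simp +contextual
  · intro b _ hb; apply Finset.sum_eq_zero; simp +contextual [hb.symm, Ne.symm]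
  · simp

lemma hasFDerivAt_g (ε : ℝ) (x : OPt) :
    HasFDerivAt (fun y => ptNormSq y + ε) (Dg x) x := by
  have h : HasFDerivAt ptNormSq (Dg x) x := by
    have hterm : ∀ (α : Fin 2) (p : Fin 8),
        HasFDerivAt (fun y : OPt => (ev α p y) ^ 2) ((2 * x α p) • ev α p) x := by
      intro α p
      have h := ((ev α p).hasFDerivAt (x := x)).mul ((ev α p).hasFDerivAt (x := x))
      have he : (ev α p x • ev α p + ev α p x • ev α p) = (2 * x α p) • ev α p := by
        ext v; simp [ev_apply]; ring
      rw [he] at h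
      simp only [pow_two]; exact h
    have : ptNormSq = fun y : OPt => ∑ α : Fin 2, ∑ p : Fin 8, (ev α p y) ^ 2 := by
      funext y; simp [ptNormSq, ev_apply]
    rw [this]
    exact HasFDerivAt.fun_sum fun α _ => HasFDerivAt.fun_sum fun p _ => hterm α p
  simpa using h.add_const ε
section Deriv

variable {ε : ℝ} (hε : 0 < ε)

lemma g_pos (hε : 0 < ε) (y : OPt) : 0 < ptNormSq y + ε := by
  have : 0 ≤ ptNormSq y :=
    Finset.sum_nonneg fun α _ => Finset.sum_nonneg fun p _ => sq_nonneg _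
  linarith

lemma hasFDerivAt_K (hε : 0 < ε) (x : OPt) :
    HasFDerivAt (fun y => -((ptNormSq y + ε) ^ 3)⁻¹)
      ((3 * (((ptNormSq x + ε)) ^ 4)⁻¹) • Dg x) x := by
  set t := ptNormSq x + ε with ht
  have htpos := g_pos hε x
  have htne : t ≠ 0 := ne_of_gt htpos
  have h1 : HasDerivAt (fun s : ℝ => -((s ^ 3)⁻¹)) (3 * (t ^ 4)⁻¹) t := by
    have h2 : HasDerivAt (fun s : ℝ => (s ^ 3)⁻¹)
        (-(((3 : ℕ) : ℝ) * t ^ 2) / (t ^ 3) ^ 2) t :=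
      (hasDerivAt_pow 3 t).inv (pow_ne_zero 3 htne)
    have := h2.fun_neg
    refine this.congr_deriv ?_
    field_simp
    ring
  have := h1.comp_hasFDerivAt x (hasFDerivAt_g ε x); exact this

lemma pd_K (hε : 0 < ε) (β : Fin 2) (p : Fin 8) :
    (fun y => pd β p (fun z => -((ptNormSq z + ε) ^ 3)⁻¹) y) =
      fun y => (6 * y β p) * ((ptNormSq y + ε) ^ 4)⁻¹ := by
  funext y
  rw [pd, (hasFDerivAt_K hε y).fderiv]
  rw [ContinuousLinearMap.smul_apply, Dg_single]
  simp [smul_eq_mul]; ring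

lemma pd_pd_K (hε : 0 < ε) (α β : Fin 2) (q p : Fin 8) (x : OPt) :
    pd α q (fun y => pd β p (fun z => -((ptNormSq z + ε) ^ 3)⁻¹) y) x =
      -48 * x α q * x β p * ((ptNormSq x + ε) ^ 5)⁻¹ +
        (if α = β ∧ q = p then 6 * ((ptNormSq x + ε) ^ 4)⁻¹ else 0) := by
  have htpos := g_pos hε x
  have htne : ptNormSq x + ε ≠ 0 := ne_of_gt htpos
  have hc : HasFDerivAt (fun y : OPt => 6 * y β p) ((6 : ℝ) • ev β p) x := by
    exact ((ev β p).hasFDerivAt (x := x)).const_mul (6 : ℝ)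
  have hd : HasFDerivAt (fun y : OPt => ((ptNormSq y + ε) ^ 4)⁻¹)
      ((-(((4 : ℕ) : ℝ) * (ptNormSq x + ε) ^ 3) / ((ptNormSq x + ε) ^ 4) ^ 2) • Dg x) x := by
    have h2 : HasDerivAt (fun s : ℝ => (s ^ 4)⁻¹)
        (-(((4 : ℕ) : ℝ) * (ptNormSq x + ε) ^ 3) / ((ptNormSq x + ε) ^ 4) ^ 2)
        (ptNormSq x + ε) :=
      (hasDerivAt_pow 4 (ptNormSq x + ε)).inv (pow_ne_zero 4 htne)
    have := h2.comp_hasFDerivAt x (hasFDerivAt_g ε x); exact this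
  have hmul := hc.fun_mul hd
  rw [pd_K hε β p, pd, hmul.fderiv]
  rw [ContinuousLinearMap.add_apply, ContinuousLinearMap.smul_apply,
    ContinuousLinearMap.smul_apply, ContinuousLinearMap.smul_apply, Dg_single,
    ContinuousLinearMap.smul_apply, ev_single]
  rcases eq_or_ne α β with h | h
  · subst h
    rcases eq_or_ne q p with h2 | h2
    · subst h2
      simp only [and_self, if_true, smul_eq_mul]
      push_cast
      field_simp
      ring
    · rw [if_neg (by exact fun hh => h2 (hh.2.symm)), if_neg (by simp [h2])]
      push_cast
      simp only [smul_eq_mul]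
      field_simp
      ring
  · have h' : ¬ (β = α ∧ p = q) := by tauto
    simp only [h, false_and, if_false, h', smul_eq_mul]
    push_cast
    field_simp
    ring

end Deriv
open Octonion in
lemma octHess_K {ε : ℝ} (hε : 0 < ε) (α β : Fin 2) (x : OPt) :
    octHess (fun y => -((ptNormSq y + ε) ^ 3)⁻¹) α β x =
      (-48 * ((ptNormSq x + ε) ^ 5)⁻¹) • (octPt x α * conj (octPt x β)) +
        (if α = β then 48 * ((ptNormSq x + ε) ^ 4)⁻¹ else 0) • (1 : Octonion) := by
  set t := ptNormSq x + ε with ht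
  rw [octHess]
  have hsplit : ∀ q p : Fin 8,
      (pd α q (fun y => pd β p (fun z => -((ptNormSq z + ε) ^ 3)⁻¹) y) x) •
          (basisE q * conj (basisE p)) =
        ((-48 * (t ^ 5)⁻¹) * (x α q * x β p)) • (basisE q * conj (basisE p)) +
          (if α = β ∧ q = p then (6 * (t ^ 4)⁻¹ : ℝ) else 0) • (basisE q * conj (basisE p)) := by
    intro q p
    rw [pd_pd_K hε, ← add_smul]
    congr 1
    ring
  simp_rw [hsplit, Finset.sum_add_distrib]
  congr 1
  · rw [octPt, octPt, ← sum_smul_mul, Finset.smul_sum]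
    refine Finset.sum_congr rfl fun q _ => ?_
    rw [Finset.smul_sum]
    refine Finset.sum_congr rfl fun p _ => ?_
    rw [smul_smul]
  · rcases eq_or_ne α β with h | h
    · subst h
      simp only [eq_self_iff_true, if_true, true_and]
      have hq : ∀ q : Fin 8,
          ∑ p : Fin 8, (if q = p then (6 * (t ^ 4)⁻¹ : ℝ) else 0) • (basisE q * conj (basisE p)) =
            (6 * (t ^ 4)⁻¹ : ℝ) • (basisE q * conj (basisE q)) := by
        intro q
        rw [Finset.sum_eq_single q]
        · simp
        · intro p _ hp; rw [if_neg (Ne.symm hp), zero_smul]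
        · simp
      simp_rw [hq]
      rw [← Finset.smul_sum, sum_basis_mul_conj, smul_smul]
      congr 1
      ring
    · simp [h]

open Octonion in
lemma ptNormSq_eq (x : OPt) :
    ptNormSq x = normSq (octPt x 0) + normSq (octPt x 1) := by
  rw [octPt, octPt, normSq_octOf, normSq_octOf, ptNormSq, Fin.sum_univ_two]
open Octonion in
/-- For `K_ε(x) = -(|x|²+ε)⁻³` on `O² ≅ ℝ¹⁶` with `ε > 0`, the octonionic
Hessian has entries `conj∂_α ∂_β K_ε = -48(|x|²+ε)⁻⁵ x_α conj(x_β) + 48 δ_{αβ}(|x|²+ε)⁻⁴`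
and determinant `det(Hess_O(K_ε)) = 48² ε/(|x|²+ε)⁹ > 0`. -/
theorem octHess_fundamental_solution (ε : ℝ) (hε : 0 < ε) (x : OPt) :
    (∀ α β : Fin 2,
      octHess (fun y => -((ptNormSq y + ε) ^ 3)⁻¹) α β x =
        (-48 * ((ptNormSq x + ε) ^ 5)⁻¹) • (octPt x α * conj (octPt x β)) +
          (if α = β then 48 * ((ptNormSq x + ε) ^ 4)⁻¹ else 0) • (1 : Octonion)) ∧
    detEntries (fun α β => octHess (fun y => -((ptNormSq y + ε) ^ 3)⁻¹) α β x) =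
      48 ^ 2 * ε * ((ptNormSq x + ε) ^ 9)⁻¹ ∧
    0 < 48 ^ 2 * ε * ((ptNormSq x + ε) ^ 9)⁻¹ := by
  have htpos := g_pos hε x
  have htne : ptNormSq x + ε ≠ 0 := ne_of_gt htpos
  refine ⟨fun α β => octHess_K hε α β x, ?_, by positivity⟩
  rw [detEntries]
  simp only [octHess_K hε, reduceIte, zero_smul, add_zero]
  have hdiag : ∀ α : Fin 2,
      re ((-48 * ((ptNormSq x + ε) ^ 5)⁻¹) • (octPt x α * conj (octPt x α)) +
          ((48 : ℝ) * ((ptNormSq x + ε) ^ 4)⁻¹) • (1 : Octonion)) =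
        (-48 * ((ptNormSq x + ε) ^ 5)⁻¹) * normSq (octPt x α) +
          48 * ((ptNormSq x + ε) ^ 4)⁻¹ := by
    intro α
    rw [mul_conj_self, re_add, re_smul, re_smul_one, re_smul_one]
  have hoff :
      normSq ((-48 * ((ptNormSq x + ε) ^ 5)⁻¹) • (octPt x 0 * conj (octPt x 1))) =
        (-48 * ((ptNormSq x + ε) ^ 5)⁻¹) ^ 2 * (normSq (octPt x 0) * normSq (octPt x 1)) := by
    rw [Octonion.normSq_smul, Octonion.normSq_mul, Octonion.normSq_conj]
  rw [if_neg (show ¬((0 : Fin 2) = 1) by decide), zero_smul, add_zero]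
  rw [hdiag 0, hdiag 1, hoff]
  have hpt : ptNormSq x = normSq (octPt x 0) + normSq (octPt x 1) := ptNormSq_eq x
  have key : ∀ t N0 N1 : ℝ, t ≠ 0 → t = N0 + N1 + ε →
      (-48 * (t ^ 5)⁻¹ * N0 + 48 * (t ^ 4)⁻¹) * (-48 * (t ^ 5)⁻¹ * N1 + 48 * (t ^ 4)⁻¹) -
          (-48 * (t ^ 5)⁻¹) ^ 2 * (N0 * N1) =
        48 ^ 2 * ε * (t ^ 9)⁻¹ := by
    intro t N0 N1 ht h
    have hε' : ε = t - N0 - N1 := by rw [h]; ring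
    rw [hε']
    field_simp
    ring
  exact key _ _ _ htne (by rw [hpt])
end
end
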